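/- Define λ₁⁰(r,a,b) = -2 r^{2(σ-σ₁)} Γ₁(r,a) (1 + Γ₂(r,a,b))^{-1}. Then for all j, m ∈ ℕ, |∂^{j+m}/(∂aʲ ∂bᵐ) λ₁⁰(r,a,b)| ≤ C r^{2(σ-σ₁)+2j(σ₂-σ₁)+2m(σ-2σ₁)} uniformly on (r,a,b) ∈ (0,ε*] × [0,1] × [0,1], and at (a,b)=(0,0) the derivative equals C_{1,j,m} r^{2(σ-σ₁)+2j(σ₂-σ₁)+2m(σ-2σ₁)} for some constant C_{1,j,m}. -/

import Mathlib

open Real Set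

noncomputable def Gamma1 (σ₁ σ₂ r a : ℝ) : ℝ := (1 + a * r ^ (2*(σ₂-σ₁)))⁻¹

noncomputable def Gamma2 (σ σ₁ σ₂ r a b : ℝ) : ℝ :=
  Real.sqrt (1 - 4*b*r ^ (2*(σ-2*σ₁)) * (Gamma1 σ₁ σ₂ r a)^2)

/-- Mixed partial derivative `∂^{j+m}/(∂aʲ ∂bᵐ)`. -/
noncomputable def pderiv2 (j m : ℕ) (f : ℝ → ℝ → ℝ) (a b : ℝ) : ℝ :=
  iteratedDeriv m (fun b' => iteratedDeriv j (fun a' => f a' b') a) b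

noncomputable def lam1 (σ σ₁ σ₂ r a b : ℝ) : ℝ :=
  -2 * r ^ (2*(σ-σ₁)) * Gamma1 σ₁ σ₂ r a * (1 + Gamma2 σ σ₁ σ₂ r a b)⁻¹

noncomputable def lam2 (σ σ₁ σ₂ r a b : ℝ) : ℝ :=
  -(r ^ (2*σ₁) / 2) * (1 + a * r ^ (2*(σ₂-σ₁))) * (1 + Gamma2 σ σ₁ σ₂ r a b)

noncomputable def Gfun (σ σ₁ σ₂ r a b : ℝ) : ℝ :=
  r ^ (2*σ₁) * (1 + a * r ^ (2*(σ₂-σ₁))) * Gamma2 σ σ₁ σ₂ r a b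



namespace Stmt2Aux

inductive Expr where
  | X | Y | C (c : ℝ) | add (e f : Expr) | mul (e f : Expr) | g1 | g2 | g3 | g4

noncomputable def eval : Expr → ℝ → ℝ → ℝ
  | .X => fun x _ => x
  | .Y => fun _ y => y
  | .C c => fun _ _ => c
  | .add e f => fun x y => eval e x y + eval f x y
  | .mul e f => fun x y => eval e x y * eval f x y
  | .g1 => fun x _ => (1 + x)⁻¹
  | .g2 => fun x y => Real.sqrt (1 - 4*y*((1+x)⁻¹)^2)
  | .g3 => fun x y => (Real.sqrt (1 - 4*y*((1+x)⁻¹)^2))⁻¹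
  | .g4 => fun x y => (1 + Real.sqrt (1 - 4*y*((1+x)⁻¹)^2))⁻¹

def d1 : Expr → Expr
  | .X => .C 1
  | .Y => .C 0
  | .C _ => .C 0
  | .add e f => .add (d1 e) (d1 f)
  | .mul e f => .add (.mul (d1 e) f) (.mul e (d1 f))
  | .g1 => .mul (.C (-1)) (.mul .g1 .g1)
  | .g2 => .mul (.C 4) (.mul .Y (.mul .g1 (.mul .g1 (.mul .g1 .g3))))
  | .g3 => .mul (.C (-4)) (.mul .Y (.mul .g1 (.mul .g1 (.mul .g1 (.mul .g3 (.mul .g3 .g3))))))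
  | .g4 => .mul (.C (-4)) (.mul .Y (.mul .g1 (.mul .g1 (.mul .g1 (.mul .g3 (.mul .g4 .g4))))))

def d2 : Expr → Expr
  | .X => .C 0
  | .Y => .C 1
  | .C _ => .C 0
  | .add e f => .add (d2 e) (d2 f)
  | .mul e f => .add (.mul (d2 e) f) (.mul e (d2 f))
  | .g1 => .C 0
  | .g2 => .mul (.C (-2)) (.mul .g1 (.mul .g1 .g3))
  | .g3 => .mul (.C 2) (.mul .g1 (.mul .g1 (.mul .g3 (.mul .g3 .g3))))
  | .g4 => .mul (.C 2) (.mul .g1 (.mul .g1 (.mul .g3 (.mul .g4 .g4))))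

def U : Set (ℝ × ℝ) := {q | 0 < 1 + q.1 ∧ 4*q.2 < (1+q.1)^2}

lemma isOpen_U : IsOpen U := by
  have h1 : IsOpen {q : ℝ × ℝ | 0 < 1 + q.1} :=
    isOpen_lt continuous_const (continuous_const.add continuous_fst)
  have h2 : IsOpen {q : ℝ × ℝ | 4*q.2 < (1+q.1)^2} :=
    isOpen_lt (continuous_const.mul continuous_snd)
      ((continuous_const.add continuous_fst).pow 2)
  exact h1.inter h2

lemma mem_U_pos {x y : ℝ} (h : (x, y) ∈ U) : 0 < 1 - 4*y*((1+x)⁻¹)^2 := by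
  obtain ⟨h1, h2⟩ := h
  simp only at h1 h2
  have hne : (1+x) ≠ 0 := ne_of_gt h1
  have hp : (0:ℝ) < (1+x)^2 := by positivity
  rw [show 1 - 4*y*((1+x)⁻¹)^2 = ((1+x)^2 - 4*y) * ((1+x)^2)⁻¹ by field_simp]
  exact mul_pos (by linarith) (inv_pos.2 hp)

lemma sqrt_pos_of_mem {x y : ℝ} (h : (x, y) ∈ U) :
    0 < Real.sqrt (1 - 4*y*((1+x)⁻¹)^2) :=
  Real.sqrt_pos.2 (mem_U_pos h)

/-- derivative of the inner expression in `x`. -/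
lemma hD_w1 {x : ℝ} (y : ℝ) (h1 : 0 < 1 + x) :
    HasDerivAt (fun x' => 1 - 4*y*((1+x')⁻¹)^2) (8*y*((1+x)⁻¹)^3) x := by
  have hne : (1+x) ≠ 0 := ne_of_gt h1
  have hg1 : HasDerivAt (fun x' => (1+x')⁻¹) (-1/(1+x)^2) x := by
    exact ((hasDerivAt_id x).const_add 1).inv hne
  have hpow := hg1.pow 2
  have h := (hpow.const_mul (4*y)).const_sub 1
  refine h.congr_deriv ?_
  rw [show (2:ℕ)-1 = 1 from rfl, div_eq_mul_inv, ← inv_pow]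
  push_cast
  ring

lemma hD_g1 {x : ℝ} (h1 : 0 < 1 + x) :
    HasDerivAt (fun x' => (1+x')⁻¹) (-1/(1+x)^2) x := by
  exact ((hasDerivAt_id x).const_add 1).inv (ne_of_gt h1)

/-- derivative of sqrt expression in `x`. -/
lemma hD_s1 {x y : ℝ} (h : (x, y) ∈ U) :
    HasDerivAt (fun x' => Real.sqrt (1 - 4*y*((1+x')⁻¹)^2))
      (8*y*((1+x)⁻¹)^3 / (2 * Real.sqrt (1 - 4*y*((1+x)⁻¹)^2))) x :=
  (hD_w1 y h.1).sqrt (ne_of_gt (mem_U_pos h))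

lemma hD_w2 {y : ℝ} (x : ℝ) :
    HasDerivAt (fun y' => 1 - 4*y'*((1+x)⁻¹)^2) (-(4*((1+x)⁻¹)^2)) y := by
  have h := (((hasDerivAt_id y).const_mul 4).mul_const (((1+x)⁻¹)^2)).const_sub 1
  refine h.congr_deriv ?_
  ring

lemma hD_s2 {x y : ℝ} (h : (x, y) ∈ U) :
    HasDerivAt (fun y' => Real.sqrt (1 - 4*y'*((1+x)⁻¹)^2))
      (-(4*((1+x)⁻¹)^2) / (2 * Real.sqrt (1 - 4*y*((1+x)⁻¹)^2))) y :=
  (hD_w2 x).sqrt (ne_of_gt (mem_U_pos h))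

lemma hasDeriv1 (e : Expr) : ∀ x y : ℝ, (x, y) ∈ U →
    HasDerivAt (fun x' => eval e x' y) (eval (d1 e) x y) x := by
  induction e with
  | X => intro x y _; simp only [eval, d1]; exact hasDerivAt_id x
  | Y => intro x y _; simp [eval, d1]; exact hasDerivAt_const x y
  | C c => intro x y _; simp [eval, d1]; exact hasDerivAt_const x c
  | add e f ihe ihf =>
      intro x y h; simp only [eval, d1]; exact (ihe x y h).add (ihf x y h)
  | mul e f ihe ihf =>
      intro x y h; simp only [eval, d1]; exact (ihe x y h).mul (ihf x y h)
  | g1 =>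
      intro x y h
      have := hD_g1 h.1
      simp only [eval, d1]
      convert this using 1
      have hne : (1+x) ≠ 0 := ne_of_gt h.1
      field_simp
  | g2 =>
      intro x y h
      have hs := sqrt_pos_of_mem h
      have hne : (1+x) ≠ 0 := ne_of_gt h.1
      have := hD_s1 h
      simp only [eval, d1]
      convert this using 1
      set s := Real.sqrt (1 - 4*y*((1+x)⁻¹)^2) with hsdef
      field_simp
      ring
  | g3 =>
      intro x y h
      have hs := sqrt_pos_of_mem h
      have hne : (1+x) ≠ 0 := ne_of_gt h.1
      have h' := (hD_s1 h).inv (ne_of_gt hs)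
      simp only [eval, d1]
      refine h'.congr_deriv ?_
      set s := Real.sqrt (1 - 4*y*((1+x)⁻¹)^2) with hsdef
      field_simp
      ring
  | g4 =>
      intro x y h
      have hs := sqrt_pos_of_mem h
      have hne : (1+x) ≠ 0 := ne_of_gt h.1
      have hne2 : (1 + Real.sqrt (1 - 4*y*((1+x)⁻¹)^2)) ≠ 0 := by positivity
      have h' := ((hD_s1 h).const_add 1).inv hne2
      simp only [eval, d1]
      refine h'.congr_deriv ?_
      set s := Real.sqrt (1 - 4*y*((1+x)⁻¹)^2) with hsdef
      have hsne : s ≠ 0 := ne_of_gt hs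
      have h1s : 1 + s ≠ 0 := hne2
      field_simp
      ring

lemma hasDeriv2 (e : Expr) : ∀ x y : ℝ, (x, y) ∈ U →
    HasDerivAt (fun y' => eval e x y') (eval (d2 e) x y) y := by
  induction e with
  | X => intro x y _; simp [eval, d2]; exact hasDerivAt_const y x
  | Y => intro x y _; simp only [eval, d2]; exact hasDerivAt_id y
  | C c => intro x y _; simp [eval, d2]; exact hasDerivAt_const y c
  | add e f ihe ihf =>
      intro x y h; simp only [eval, d2]; exact (ihe x y h).add (ihf x y h)
  | mul e f ihe ihf =>
      intro x y h; simp only [eval, d2]; exact (ihe x y h).mul (ihf x y h)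
  | g1 =>
      intro x y _; simp [eval, d2]; exact hasDerivAt_const y _
  | g2 =>
      intro x y h
      have hs := sqrt_pos_of_mem h
      have hne : (1+x) ≠ 0 := ne_of_gt h.1
      have := hD_s2 h
      simp only [eval, d2]
      convert this using 1
      set s := Real.sqrt (1 - 4*y*((1+x)⁻¹)^2) with hsdef
      have hsne : s ≠ 0 := ne_of_gt hs
      field_simp
      ring
  | g3 =>
      intro x y h
      have hs := sqrt_pos_of_mem h
      have hne : (1+x) ≠ 0 := ne_of_gt h.1
      have h' := (hD_s2 h).inv (ne_of_gt hs)
      simp only [eval, d2]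
      refine h'.congr_deriv ?_
      set s := Real.sqrt (1 - 4*y*((1+x)⁻¹)^2) with hsdef
      have hsne : s ≠ 0 := ne_of_gt hs
      field_simp
      ring
  | g4 =>
      intro x y h
      have hs := sqrt_pos_of_mem h
      have hne : (1+x) ≠ 0 := ne_of_gt h.1
      have hne2 : (1 + Real.sqrt (1 - 4*y*((1+x)⁻¹)^2)) ≠ 0 := by positivity
      have h' := ((hD_s2 h).const_add 1).inv hne2
      simp only [eval, d2]
      refine h'.congr_deriv ?_
      set s := Real.sqrt (1 - 4*y*((1+x)⁻¹)^2) with hsdef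
      have hsne : s ≠ 0 := ne_of_gt hs
      have h1s : 1 + s ≠ 0 := hne2
      field_simp
      ring

lemma contOn (e : Expr) : ContinuousOn (fun q : ℝ × ℝ => eval e q.1 q.2) U := by
  have hg1 : ContinuousOn (fun q : ℝ × ℝ => (1+q.1)⁻¹) U :=
    (continuous_const.add continuous_fst).continuousOn.inv₀ (fun q hq => ne_of_gt hq.1)
  have harg : ContinuousOn (fun q : ℝ × ℝ => 1 - 4*q.2*((1+q.1)⁻¹)^2) U :=
    continuousOn_const.sub
      (((continuousOn_const.mul continuous_snd.continuousOn)).mul (hg1.pow 2))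
  have hg2 : ContinuousOn (fun q : ℝ × ℝ => Real.sqrt (1 - 4*q.2*((1+q.1)⁻¹)^2)) U :=
    Real.continuous_sqrt.comp_continuousOn harg
  have hg2ne : ∀ q ∈ U, Real.sqrt (1 - 4*q.2*((1+q.1)⁻¹)^2) ≠ 0 := by
    intro q hq
    exact ne_of_gt (sqrt_pos_of_mem (x := q.1) (y := q.2) hq)
  induction e with
  | X => exact continuous_fst.continuousOn
  | Y => exact continuous_snd.continuousOn
  | C c => exact continuousOn_const
  | add e f ihe ihf => exact ihe.add ihf
  | mul e f ihe ihf => exact ihe.mul ihf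
  | g1 => exact hg1
  | g2 => exact hg2
  | g3 => exact hg2.inv₀ hg2ne
  | g4 =>
      refine (continuousOn_const.add hg2).inv₀ (fun q hq => ?_)
      have := sqrt_pos_of_mem (x := q.1) (y := q.2) hq
      show 1 + Real.sqrt (1 - 4*q.2*((1+q.1)⁻¹)^2) ≠ 0
      positivity

lemma iteratedDeriv_congr_nhds {f g : ℝ → ℝ} {x : ℝ} (h : f =ᶠ[nhds x] g) (m : ℕ) :
    iteratedDeriv m f x = iteratedDeriv m g x := by
  have H : deriv^[m] f =ᶠ[nhds x] deriv^[m] g := by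
    induction m with
    | zero => exact h
    | succ n ih =>
        rw [Function.iterate_succ_apply', Function.iterate_succ_apply']
        exact ih.deriv
  rw [iteratedDeriv_eq_iterate, iteratedDeriv_eq_iterate]
  exact H.eq_of_nhds

lemma iter1 (e : Expr) (Kc c y : ℝ) (j : ℕ) :
    ∀ a : ℝ, (a*c, y) ∈ U →
      iteratedDeriv j (fun a' => Kc * eval e (a'*c) y) a
        = Kc * c^j * eval (d1^[j] e) (a*c) y := by
  induction j with
  | zero => intro a _; simp [d1]
  | succ n ih =>
      intro a ha
      have hVopen : IsOpen {a' : ℝ | (a'*c, y) ∈ U} :=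
        isOpen_U.preimage (by fun_prop)
      have hev : (fun a' => iteratedDeriv n (fun a'' => Kc * eval e (a''*c) y) a')
          =ᶠ[nhds a] (fun a' => Kc * c^n * eval (d1^[n] e) (a'*c) y) := by
        filter_upwards [hVopen.mem_nhds ha] with a' ha'
        exact ih a' ha'
      rw [iteratedDeriv_succ, hev.deriv_eq]
      have hlin : HasDerivAt (fun a' : ℝ => a'*c) c a := hasDerivAt_mul_const c
      have h0 := hasDeriv1 (d1^[n] e) (a*c) y ha
      have hcomp : HasDerivAt (fun a' => eval (d1^[n] e) (a'*c) y)
          (eval (d1 (d1^[n] e)) (a*c) y * c) a := by have := h0.comp a hlin; exact this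
      have := (hcomp.const_mul (Kc * c^n)).deriv
      rw [this, Function.iterate_succ_apply']
      ring

lemma iter2 (e : Expr) (Kc d x : ℝ) (m : ℕ) :
    ∀ b : ℝ, (x, b*d) ∈ U →
      iteratedDeriv m (fun b' => Kc * eval e x (b'*d)) b
        = Kc * d^m * eval (d2^[m] e) x (b*d) := by
  induction m with
  | zero => intro b _; simp [d2]
  | succ n ih =>
      intro b hb
      have hVopen : IsOpen {b' : ℝ | (x, b'*d) ∈ U} :=
        isOpen_U.preimage (by fun_prop)
      have hev : (fun b' => iteratedDeriv n (fun b'' => Kc * eval e x (b''*d)) b')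
          =ᶠ[nhds b] (fun b' => Kc * d^n * eval (d2^[n] e) x (b'*d)) := by
        filter_upwards [hVopen.mem_nhds hb] with b' hb'
        exact ih b' hb'
      rw [iteratedDeriv_succ, hev.deriv_eq]
      have hlin : HasDerivAt (fun b' : ℝ => b'*d) d b := hasDerivAt_mul_const d
      have h0 := hasDeriv2 (d2^[n] e) x (b*d) hb
      have hcomp : HasDerivAt (fun b' => eval (d2^[n] e) x (b'*d))
          (eval (d2 (d2^[n] e)) x (b*d) * d) b := h0.comp b hlin
      have := (hcomp.const_mul (Kc * d^n)).deriv
      rw [this, Function.iterate_succ_apply']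
      ring

lemma rep (e : Expr) (Kc c d a b : ℝ) (j m : ℕ) (h : (a*c, b*d) ∈ U) :
    pderiv2 j m (fun a' b' => Kc * eval e (a'*c) (b'*d)) a b
      = Kc * c^j * d^m * eval (d2^[m] (d1^[j] e)) (a*c) (b*d) := by
  unfold pderiv2
  have hWopen : IsOpen {b' : ℝ | (a*c, b'*d) ∈ U} :=
    isOpen_U.preimage (by fun_prop)
  have hev : (fun b' => iteratedDeriv j (fun a' => Kc * eval e (a'*c) (b'*d)) a)
      =ᶠ[nhds b] (fun b' => (Kc * c^j) * eval (d1^[j] e) (a*c) (b'*d)) := by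
    filter_upwards [hWopen.mem_nhds h] with b' hb'
    exact iter1 e Kc c (b'*d) j a hb'
  rw [iteratedDeriv_congr_nhds hev m, iter2 (d1^[j] e) (Kc * c^j) d (a*c) m b h]

end Stmt2Aux

open Stmt2Aux

theorem stmt2 (σ σ₁ σ₂ εs : ℝ) (hσ : 1 ≤ σ) (hσ₁ : 0 ≤ σ₁) (h12 : σ₁ < σ / 2)
    (h22 : σ / 2 < σ₂) (h2σ : σ₂ ≤ σ) (hε : 0 < εs)
    (hpos : ∀ r ∈ Set.Ioc (0:ℝ) εs, ∀ a ∈ Set.Icc (0:ℝ) 1, ∀ b ∈ Set.Icc (0:ℝ) 1,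
      0 < 1 - 4*b*r ^ (2*(σ-2*σ₁)) * (Gamma1 σ₁ σ₂ r a)^2)
    (j m : ℕ) :
    (∃ C > 0, ∀ r ∈ Set.Ioc (0:ℝ) εs, ∀ a ∈ Set.Icc (0:ℝ) 1, ∀ b ∈ Set.Icc (0:ℝ) 1,
      |pderiv2 j m (fun a' b' => lam1 σ σ₁ σ₂ r a' b') a b|
        ≤ C * r ^ (2*(σ-σ₁) + 2*(j:ℝ)*(σ₂-σ₁) + 2*(m:ℝ)*(σ-2*σ₁))) ∧
    (∃ C1jm : ℝ, ∀ r ∈ Set.Ioc (0:ℝ) εs,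
      pderiv2 j m (fun a' b' => lam1 σ σ₁ σ₂ r a' b') 0 0
        = C1jm * r ^ (2*(σ-σ₁) + 2*(j:ℝ)*(σ₂-σ₁) + 2*(m:ℝ)*(σ-2*σ₁))) := by
  have hα : (0:ℝ) ≤ 2*(σ₂-σ₁) := by linarith
  have hβ : (0:ℝ) ≤ 2*(σ-2*σ₁) := by linarith
  have hcα : (0:ℝ) < εs ^ (2*(σ₂-σ₁)) := Real.rpow_pos_of_pos hε _
  have hcβ : (0:ℝ) < εs ^ (2*(σ-2*σ₁)) := Real.rpow_pos_of_pos hε _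
  set F : Expr := .mul .g1 .g4 with hF
  set e' : Expr := d2^[m] (d1^[j] F) with he'
  set K : Set (ℝ × ℝ) :=
    Icc 0 (εs ^ (2*(σ₂-σ₁))) ×ˢ Icc 0 (εs ^ (2*(σ-2*σ₁))) with hKdef
  -- K ⊆ U
  have hKU : K ⊆ U := by
    rintro ⟨x, y⟩ ⟨⟨hx0, hx1⟩, ⟨hy0, hy1⟩⟩
    have h1x : (0:ℝ) < 1 + x := by linarith
    have hsq : (0:ℝ) < (1+x)^2 := by positivity
    have ha : x * (εs ^ (2*(σ₂-σ₁)))⁻¹ ∈ Icc (0:ℝ) 1 := by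
      constructor
      · positivity
      · rw [← div_eq_mul_inv, div_le_one hcα]; exact hx1
    have hb : y * (εs ^ (2*(σ-2*σ₁)))⁻¹ ∈ Icc (0:ℝ) 1 := by
      constructor
      · positivity
      · rw [← div_eq_mul_inv, div_le_one hcβ]; exact hy1
    have h := hpos εs ⟨hε, le_refl _⟩ _ ha _ hb
    have hG : Gamma1 σ₁ σ₂ εs (x * (εs ^ (2*(σ₂-σ₁)))⁻¹) = (1+x)⁻¹ := by
      unfold Gamma1
      rw [mul_assoc, inv_mul_cancel₀ (ne_of_gt hcα), mul_one]
    rw [hG, show 4*(y * (εs ^ (2*(σ-2*σ₁)))⁻¹) * εs ^ (2*(σ-2*σ₁)) = 4*y by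
      field_simp] at h
    have h' : 0 < 1 - 4*y*((1+x)^2)⁻¹ := by rwa [inv_pow] at h
    have hmul := mul_pos h' hsq
    rw [sub_mul, one_mul, mul_assoc, inv_mul_cancel₀ (ne_of_gt hsq), mul_one] at hmul
    exact ⟨h1x, by linarith⟩
  have hKcomp : IsCompact K := isCompact_Icc.prod isCompact_Icc
  obtain ⟨C₀, hC₀⟩ := hKcomp.exists_bound_of_continuousOn ((contOn e').mono hKU)
  have hC₀0 : 0 ≤ C₀ :=
    le_trans (norm_nonneg _) (hC₀ (0,0) ⟨⟨le_refl _, hcα.le⟩, ⟨le_refl _, hcβ.le⟩⟩)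
  -- function rewriting
  have hfun : ∀ r : ℝ, (fun a' b' => lam1 σ σ₁ σ₂ r a' b')
      = fun a' b' => (-2 * r ^ (2*(σ-σ₁)))
          * eval F (a' * r ^ (2*(σ₂-σ₁))) (b' * r ^ (2*(σ-2*σ₁))) := by
    intro r
    funext a' b'
    simp only [lam1, Gamma1, Gamma2, hF, eval]
    rw [show 1 - 4*(b' * r ^ (2*(σ-2*σ₁)))*((1 + a' * r ^ (2*(σ₂-σ₁)))⁻¹)^2
        = 1 - 4*b'*r ^ (2*(σ-2*σ₁))*((1 + a' * r ^ (2*(σ₂-σ₁)))⁻¹)^2 by ring]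
    ring
  -- collapsing powers
  have hpow : ∀ r : ℝ, 0 < r →
      r ^ (2*(σ-σ₁)) * (r ^ (2*(σ₂-σ₁)))^j * (r ^ (2*(σ-2*σ₁)))^m
        = r ^ (2*(σ-σ₁) + 2*(j:ℝ)*(σ₂-σ₁) + 2*(m:ℝ)*(σ-2*σ₁)) := by
    intro r hr
    rw [← Real.rpow_natCast (r ^ (2*(σ₂-σ₁))) j, ← Real.rpow_natCast (r ^ (2*(σ-2*σ₁))) m,
      ← Real.rpow_mul hr.le, ← Real.rpow_mul hr.le,
      ← Real.rpow_add hr, ← Real.rpow_add hr]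
    congr 1
    ring
  -- membership of scaled points in K
  have hmemK : ∀ r ∈ Set.Ioc (0:ℝ) εs, ∀ a ∈ Icc (0:ℝ) 1, ∀ b ∈ Icc (0:ℝ) 1,
      (a * r ^ (2*(σ₂-σ₁)), b * r ^ (2*(σ-2*σ₁))) ∈ K := by
    rintro r ⟨hr0, hrε⟩ a ⟨ha0, ha1⟩ b ⟨hb0, hb1⟩
    have hc : (0:ℝ) < r ^ (2*(σ₂-σ₁)) := Real.rpow_pos_of_pos hr0 _
    have hd : (0:ℝ) < r ^ (2*(σ-2*σ₁)) := Real.rpow_pos_of_pos hr0 _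
    refine ⟨⟨by positivity, ?_⟩, ⟨by positivity, ?_⟩⟩
    · calc a * r ^ (2*(σ₂-σ₁)) ≤ r ^ (2*(σ₂-σ₁)) :=
            mul_le_of_le_one_left hc.le ha1
        _ ≤ εs ^ (2*(σ₂-σ₁)) := Real.rpow_le_rpow hr0.le hrε hα
    · calc b * r ^ (2*(σ-2*σ₁)) ≤ r ^ (2*(σ-2*σ₁)) :=
            mul_le_of_le_one_left hd.le hb1
        _ ≤ εs ^ (2*(σ-2*σ₁)) := Real.rpow_le_rpow hr0.le hrε hβ
  constructor
  · refine ⟨2*C₀ + 1, by linarith, ?_⟩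
    intro r hr a ha b hb
    have hr0 : 0 < r := hr.1
    have hrp : (0:ℝ) < r ^ (2*(σ-σ₁)) := Real.rpow_pos_of_pos hr0 _
    have hc : (0:ℝ) < r ^ (2*(σ₂-σ₁)) := Real.rpow_pos_of_pos hr0 _
    have hd : (0:ℝ) < r ^ (2*(σ-2*σ₁)) := Real.rpow_pos_of_pos hr0 _
    have hK' := hmemK r hr a ha b hb
    have hU' := hKU hK'
    rw [hfun r, rep F (-2 * r ^ (2*(σ-σ₁))) _ _ a b j m hU', ← he']
    have hV : |eval e' (a * r ^ (2*(σ₂-σ₁))) (b * r ^ (2*(σ-2*σ₁)))| ≤ C₀ := by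
      have := hC₀ _ hK'
      rwa [Real.norm_eq_abs] at this
    have hprodpos : (0:ℝ) < 2*(r ^ (2*(σ-σ₁)) * (r ^ (2*(σ₂-σ₁)))^j * (r ^ (2*(σ-2*σ₁)))^m) :=
      by positivity
    have hrE : (0:ℝ) < r ^ (2*(σ-σ₁) + 2*(j:ℝ)*(σ₂-σ₁) + 2*(m:ℝ)*(σ-2*σ₁)) :=
      Real.rpow_pos_of_pos hr0 _
    calc |(-2 * r ^ (2*(σ-σ₁))) * (r ^ (2*(σ₂-σ₁)))^j * (r ^ (2*(σ-2*σ₁)))^m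
            * eval e' (a * r ^ (2*(σ₂-σ₁))) (b * r ^ (2*(σ-2*σ₁)))|
        = 2*(r ^ (2*(σ-σ₁)) * (r ^ (2*(σ₂-σ₁)))^j * (r ^ (2*(σ-2*σ₁)))^m)
            * |eval e' (a * r ^ (2*(σ₂-σ₁))) (b * r ^ (2*(σ-2*σ₁)))| := by
          rw [show (-2 * r ^ (2*(σ-σ₁))) * (r ^ (2*(σ₂-σ₁)))^j * (r ^ (2*(σ-2*σ₁)))^m
              * eval e' (a * r ^ (2*(σ₂-σ₁))) (b * r ^ (2*(σ-2*σ₁)))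
            = -((2*(r ^ (2*(σ-σ₁)) * (r ^ (2*(σ₂-σ₁)))^j * (r ^ (2*(σ-2*σ₁)))^m))
              * eval e' (a * r ^ (2*(σ₂-σ₁))) (b * r ^ (2*(σ-2*σ₁)))) by ring]
          rw [abs_neg, abs_mul, abs_of_pos hprodpos]
      _ ≤ 2*(r ^ (2*(σ-σ₁)) * (r ^ (2*(σ₂-σ₁)))^j * (r ^ (2*(σ-2*σ₁)))^m) * C₀ :=
          mul_le_mul_of_nonneg_left hV hprodpos.le
      _ = 2*C₀ * (r ^ (2*(σ-σ₁)) * (r ^ (2*(σ₂-σ₁)))^j * (r ^ (2*(σ-2*σ₁)))^m) := by ring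
      _ = 2*C₀ * r ^ (2*(σ-σ₁) + 2*(j:ℝ)*(σ₂-σ₁) + 2*(m:ℝ)*(σ-2*σ₁)) := by
          rw [hpow r hr0]
      _ ≤ (2*C₀ + 1) * r ^ (2*(σ-σ₁) + 2*(j:ℝ)*(σ₂-σ₁) + 2*(m:ℝ)*(σ-2*σ₁)) := by
          nlinarith [hrE]
  · refine ⟨-2 * eval e' 0 0, ?_⟩
    intro r hr
    have hr0 : 0 < r := hr.1
    have hU0 : ((0:ℝ) * r ^ (2*(σ₂-σ₁)), (0:ℝ) * r ^ (2*(σ-2*σ₁))) ∈ U := by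
      constructor <;> simp <;> norm_num
    rw [hfun r, rep F (-2 * r ^ (2*(σ-σ₁))) _ _ 0 0 j m hU0, ← he']
    rw [zero_mul, zero_mul]
    calc (-2 * r ^ (2*(σ-σ₁))) * (r ^ (2*(σ₂-σ₁)))^j * (r ^ (2*(σ-2*σ₁)))^m * eval e' 0 0
        = (-2 * eval e' 0 0)
            * (r ^ (2*(σ-σ₁)) * (r ^ (2*(σ₂-σ₁)))^j * (r ^ (2*(σ-2*σ₁)))^m) := by ring
      _ = (-2 * eval e' 0 0) * r ^ (2*(σ-σ₁) + 2*(j:ℝ)*(σ₂-σ₁) + 2*(m:ℝ)*(σ-2*σ₁)) := by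
          rw [hpow r hr0]
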